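/- Let H be a Hilbert space, V a bounded nonnegative multiplication-type operator written as W·W with W = V^{1/2} bounded and self-adjoint, and let z ∈ ℂ with Im z > 0. Suppose φ ∈ H satisfies φ = W (H_0 - z)^{-1} W φ, where H_0 is a self-adjoint operator. Then φ = 0. -/

import Mathlib

theorem stmt12 {H : Type*} [NormedAddCommGroup H] [InnerProductSpace ℂ H] [CompleteSpace H]
    (H₀ V W R : H →L[ℂ] H) (hH₀ : IsSelfAdjoint H₀) (hW : IsSelfAdjoint W)
    (hV : V = W * W)
    (z : ℂ) (hz : 0 < z.im)
    (hR1 : (H₀ - z • (1 : H →L[ℂ] H)) * R = 1)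
    (hR2 : R * (H₀ - z • (1 : H →L[ℂ] H)) = 1)
    (φ : H) (hφ : φ = W (R (W φ))) : φ = 0 := by
  set ψ := R (W φ) with hψ
  have hA : H₀ ψ - z • ψ = W φ := by
    have := congrArg (fun T : H →L[ℂ] H => T (W φ)) hR1
    simpa [ContinuousLinearMap.sub_apply, ContinuousLinearMap.smul_apply] using this
  have key : (inner ℂ φ φ : ℂ) = inner ℂ (H₀ ψ) ψ - (starRingEnd ℂ) z * inner ℂ ψ ψ := by
    calc (inner ℂ φ φ : ℂ) = inner ℂ φ (W ψ) := by rw [← hφ]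
    _ = inner ℂ (W φ) ψ := by
        rw [← ContinuousLinearMap.adjoint_inner_left, hW.adjoint_eq]
    _ = inner ℂ (H₀ ψ - z • ψ) ψ := by rw [hA]
    _ = inner ℂ (H₀ ψ) ψ - (starRingEnd ℂ) z * inner ℂ ψ ψ := by
        rw [inner_sub_left, inner_smul_left]
  have him : ((inner ℂ (H₀ ψ) ψ : ℂ)).im = 0 := by
    have h1 : (starRingEnd ℂ) (inner ℂ (H₀ ψ) ψ : ℂ) = inner ℂ (H₀ ψ) ψ := by
      rw [inner_conj_symm, ← ContinuousLinearMap.adjoint_inner_left, hH₀.adjoint_eq]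
    have := congrArg Complex.im h1
    rw [Complex.conj_im] at this
    linarith
  have ha : (inner ℂ φ φ : ℂ).im = 0 := by
    exact inner_self_im (𝕜 := ℂ) _
  have hb : (inner ℂ ψ ψ : ℂ).im = 0 := by
    exact inner_self_im (𝕜 := ℂ) _
  have hzero : z.im * (inner ℂ ψ ψ : ℂ).re = 0 := by
    have := congrArg Complex.im key
    simp [him, ha, hb, Complex.sub_im, Complex.mul_im, Complex.conj_re,
      Complex.conj_im, -inner_self_eq_norm_sq_to_K] at this
    exact mul_eq_zero.mpr this
  have hψ0 : ψ = 0 := by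
    have : (inner ℂ ψ ψ : ℂ).re = 0 := by
      rcases mul_eq_zero.mp hzero with h | h
      · exact absurd h (ne_of_gt hz)
      · exact h
    have h0 : (inner ℂ ψ ψ : ℂ) = 0 := Complex.ext (by simpa using this) (by simpa using hb)
    exact inner_self_eq_zero.mp h0
  rw [hφ, hψ0, map_zero]
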